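/- Let f : [-1/2,1/2] → [0,∞) be integrable with μ({f = 0}) = m₀ and suppose p ∈ [0,1] is arbitrary. If L(s) := p·log s − c − ∫ log(1 + s f(λ)) dλ for a constant c, then limsup_{s→∞} L(s)/log s = p − μ({λ : f(λ) > 0}) = p − (1 − m₀). -/

import Mathlib

open Real Filter MeasureTheory Set

/-- Pre-log asymptotics: for nonnegative integrable `f` on `[-1/2, 1/2]` with
`μ {f = 0} = m₀`, `p ∈ [0,1]`, and
`L s = p log s - c - ∫ log (1 + s f)`, one has
`limsup_{s → ∞} L s / log s = p - (1 - m₀)`. -/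
theorem stmt_18 (f : ℝ → ℝ) (hf : Measurable f) (hf0 : ∀ x, 0 ≤ f x)
    (hfint : MeasureTheory.IntegrableOn f (Set.Icc (-(1/2) : ℝ) (1/2)))
    (m₀ : ℝ)
    (hm₀ : (MeasureTheory.volume
        ({l ∈ Set.Icc (-(1/2) : ℝ) (1/2) | f l = 0})).toReal = m₀)
    (p : ℝ) (hp0 : 0 ≤ p) (hp1 : p ≤ 1) (c : ℝ) :
    Filter.limsup
      (fun s : ℝ =>
        (p * Real.log s - c -
            ∫ l in Set.Icc (-(1/2) : ℝ) (1/2), Real.log (1 + s * f l)) /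
          Real.log s)
      Filter.atTop = p - (1 - m₀) := by
  set I : Set ℝ := Set.Icc (-(1/2) : ℝ) (1/2) with hIdef
  have hIvol : volume I = 1 := by
    rw [hIdef, Real.volume_Icc]; norm_num
  set Z : Set ℝ := {l | f l = 0} with hZdef
  have hZmeas : MeasurableSet Z := hf (measurableSet_singleton 0)
  have hImeas : MeasurableSet I := measurableSet_Icc
  -- volume of the positive part
  have hsplit : volume (I ∩ Z) + volume (I \ Z) = 1 := by
    rw [measure_inter_add_diff I hZmeas, hIvol]
  have hIZ : ({l ∈ I | f l = 0} : Set ℝ) = I ∩ Z := rfl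
  have htoReal : (volume (I \ Z)).toReal = 1 - m₀ := by
    have hfin : volume (I ∩ Z) ≠ ⊤ := by
      intro h; rw [h] at hsplit; simp at hsplit
    have hfin2 : volume (I \ Z) ≠ ⊤ := by
      intro h; rw [h] at hsplit; simp at hsplit
    have h := congrArg ENNReal.toReal hsplit
    rw [ENNReal.toReal_add hfin hfin2] at h
    rw [hIZ] at hm₀
    simp only [ENNReal.toReal_one] at h
    linarith [h, hm₀]
  -- key convergence of integrals
  have key : Tendsto (fun s : ℝ => ∫ l in I, Real.log (1 + s * f l) / Real.log s)
      atTop (nhds (1 - m₀)) := by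
    have h1m : (1 : ℝ) - m₀ = ∫ l in I, Zᶜ.indicator (fun _ => (1:ℝ)) l := by
      rw [MeasureTheory.setIntegral_indicator hZmeas.compl, MeasureTheory.setIntegral_const,
        smul_eq_mul, mul_one]
      rw [← htoReal, Set.diff_eq]
      rfl
    rw [h1m]
    apply MeasureTheory.tendsto_integral_filter_of_dominated_convergence
      (fun l => 2 + f l)
    · filter_upwards with s
      exact (((Real.measurable_log.comp (measurable_const.add
        (measurable_const.mul hf))).div_const _)).aestronglyMeasurable
    · filter_upwards [eventually_ge_atTop (3:ℝ)] with s hs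
      have hs0 : (0:ℝ) < s := by linarith
      have hlog1 : (1:ℝ) ≤ Real.log s := by
        have he : Real.exp 1 < 3 := by
          have := Real.exp_one_lt_d9; linarith
        have := (Real.lt_log_iff_exp_lt hs0).2 (lt_of_lt_of_le he hs)
        linarith
      have hlogpos : (0:ℝ) < Real.log s := by linarith
      filter_upwards with l
      have hfl := hf0 l
      have h1 : (1:ℝ) ≤ 1 + s * f l := by nlinarith
      have hlognn : 0 ≤ Real.log (1 + s * f l) := Real.log_nonneg h1
      rw [Real.norm_eq_abs, abs_of_nonneg (div_nonneg hlognn hlogpos.le)]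
      have hb1 : Real.log (1 + s * f l) ≤ Real.log (1 + s) + f l := by
        have h2 : 1 + s * f l ≤ (1 + s) * (1 + f l) := by nlinarith
        have h3 : Real.log (1 + s * f l) ≤ Real.log ((1 + s) * (1 + f l)) :=
          Real.log_le_log (by linarith) h2
        rw [Real.log_mul (by linarith) (by linarith)] at h3
        have h4 : Real.log (1 + f l) ≤ f l := by
          have := Real.log_le_sub_one_of_pos (show (0:ℝ) < 1 + f l by linarith)
          linarith
        linarith
      have hb2 : Real.log (1 + s) ≤ 2 * Real.log s := by
        have h5 : 1 + s ≤ s * s := by nlinarith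
        have h6 := Real.log_le_log (by linarith : (0:ℝ) < 1 + s) h5
        rw [Real.log_mul hs0.ne' hs0.ne'] at h6
        linarith
      rw [div_le_iff₀ hlogpos]
      nlinarith
    · refine (MeasureTheory.integrableOn_const ?_).add hfint
      rw [hIvol]; exact ENNReal.one_ne_top
    · filter_upwards with l
      by_cases hfl : f l = 0
      · have hind : Zᶜ.indicator (fun _ => (1:ℝ)) l = 0 := by
          simp [Set.indicator_apply, hZdef, hfl]
        rw [hind]
        simp only [hfl, mul_zero, add_zero, Real.log_one, zero_div]
        exact tendsto_const_nhds
      · have hflpos : 0 < f l := lt_of_le_of_ne (hf0 l) (Ne.symm hfl)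
        have hind : Zᶜ.indicator (fun _ => (1:ℝ)) l = 1 := by
          simp [Set.indicator_apply, hZdef, hfl]
        rw [hind]
        have heq : ∀ᶠ s : ℝ in atTop,
            Real.log (1 + s * f l) / Real.log s
              = 1 + Real.log (f l + 1/s) / Real.log s := by
          filter_upwards [eventually_gt_atTop (1:ℝ)] with s hs
          have hs0 : (0:ℝ) < s := by linarith
          have hlogpos : 0 < Real.log s := Real.log_pos hs
          have h1 : 1 + s * f l = s * (f l + 1/s) := by
            field_simp; ring
          rw [h1, Real.log_mul hs0.ne' (by positivity), add_div,
            div_self hlogpos.ne']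
        rw [tendsto_congr' heq]
        have h3 : Tendsto (fun s : ℝ => 1/s) atTop (nhds 0) := by
          simpa using tendsto_inv_atTop_zero
        have h2 : Tendsto (fun s : ℝ => f l + 1/s) atTop (nhds (f l)) := by
          simpa using Filter.Tendsto.const_add (f l) h3
        have hnum : Tendsto (fun s : ℝ => Real.log (f l + 1/s)) atTop
            (nhds (Real.log (f l))) :=
          (Real.continuousAt_log hflpos.ne').tendsto.comp h2
        have hdiv : Tendsto (fun s : ℝ => Real.log (f l + 1/s) / Real.log s)
            atTop (nhds 0) := hnum.div_atTop Real.tendsto_log_atTop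
        simpa using Filter.Tendsto.const_add (1:ℝ) hdiv
  -- conclude
  have main : Tendsto (fun s : ℝ =>
      (p * Real.log s - c - ∫ l in I, Real.log (1 + s * f l)) / Real.log s)
      atTop (nhds (p - (1 - m₀))) := by
    have heq : ∀ᶠ s : ℝ in atTop,
        (p * Real.log s - c - ∫ l in I, Real.log (1 + s * f l)) / Real.log s
          = p - c / Real.log s - ∫ l in I, Real.log (1 + s * f l) / Real.log s := by
      filter_upwards [eventually_gt_atTop (1:ℝ)] with s hs
      have hlog : Real.log s ≠ 0 := (Real.log_pos hs).ne'
      rw [MeasureTheory.integral_div]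
      field_simp
    rw [tendsto_congr' heq]
    have h1 : Tendsto (fun s : ℝ => c / Real.log s) atTop (nhds 0) :=
      Tendsto.div_atTop tendsto_const_nhds Real.tendsto_log_atTop
    have h2 : Tendsto (fun s : ℝ => p - c / Real.log s) atTop (nhds (p - 0)) :=
      (tendsto_const_nhds : Tendsto (fun _ : ℝ => p) atTop (nhds p)).sub h1
    simpa using h2.sub key
  exact main.limsup_eq
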